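/- In tabular TD learning with Q-values initialized to zero and a delayed reward with r_t = 0 for t ≤ T, the Q-value q(s_{T−i}, a_{T−i}) receives its first nonzero update not earlier than at episode i, at which point its value is α^{i+1} r¹_{T+1}; hence the magnitude of information propagated back decays like α^{i+1} with learning rate α < 1. -/
import Mathlib


/-- Tabular TD (Q-learning) along a chain `s_0,…,s_T` with Q-values
initialized to zero and a delayed reward `r` given only at the end of the episode
(`r_t = 0` for `t ≤ T`):  the Q-value of the state-action pair at position `T - i`
receives its first nonzero update not earlier than at episode `i` (all earlier
episodes leave it at `0`), at which point its value is `α^(i+1) r`; hence the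
magnitude of the information propagated back decays like `α^(i+1)` with learning rate
`α < 1`.  `Q j` denotes the Q-values after `j` episodes of online TD updates
`q ← q + α δ` with `δ_t = r_{t+1} + max_{a'} q(s_{t+1},a') - q(s_t,a_t)`. -/
theorem td_delayed_reward_exponential_decay
    (T : ℕ) (α r : ℝ) (hα0 : 0 < α) (hα1 : α < 1)
    (Q : ℕ → Fin (T + 1) → ℝ)
    (hQ0 : ∀ t, Q 0 t = 0)
    -- one full episode of online TD updates along the chain, with reward `r` at the end
    (hstep : ∀ i (t : Fin (T + 1)),
      Q (i + 1) t =
        Q i t + α * ((if ht : (t : ℕ) < T then Q i ⟨(t : ℕ) + 1, by omega⟩ else r)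
          - Q i t)) :
    ∀ i : ℕ, ∀ hi : i ≤ T,
      (∀ j ≤ i, Q j ⟨T - i, by omega⟩ = 0) ∧
      Q (i + 1) ⟨T - i, by omega⟩ = α ^ (i + 1) * r := by
  intro i
  induction i with
  | zero =>
    intro hi
    constructor
    · intro j hj
      interval_cases j
      exact hQ0 _
    · have h := hstep 0 ⟨T - 0, by omega⟩
      rw [dif_neg (by simp)] at h
      simp [hQ0] at h
      simpa [h] using (pow_one α).symm ▸ rfl
  | succ i ih =>
    intro hi
    obtain ⟨h0, h1⟩ := ih (by omega)
    have hfin : (⟨T - (i + 1) + 1, by omega⟩ : Fin (T + 1)) = ⟨T - i, by omega⟩ := by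
      ext; simp; omega
    have claim0 : ∀ j ≤ i + 1, Q j ⟨T - (i + 1), by omega⟩ = 0 := by
      intro j hj
      induction j with
      | zero => exact hQ0 _
      | succ j ihj =>
        have h := hstep j ⟨T - (i + 1), by omega⟩
        rw [dif_pos (by simp; omega)] at h
        rw [hfin] at h
        rw [h, ihj (by omega), h0 j (by omega)]
        ring
    refine ⟨claim0, ?_⟩
    have h := hstep (i + 1) ⟨T - (i + 1), by omega⟩
    rw [dif_pos (by simp; omega)] at h
    rw [hfin] at h
    rw [h, claim0 (i + 1) le_rfl, h1]
    ring
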